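/- With the recursively defined rational functions a_{j,k} as above, one has a_{j,d-i} ≡ 1 modulo y_i for each 1 ≤ j ≤ i−1; that is, writing a_{j,d-i} = (1+f)/(1+g), the rational function a_{j,d-i} − 1 has positive y_i-adic valuation. -/

import Mathlib

set_option maxHeartbeats 1000000
set_option synthInstance.maxHeartbeats 400000


open MvPolynomial

/-- The rational function field `F_q(y_1,…,y_{d-1})`. -/
abbrev RatField (p n d : ℕ) [Fact p.Prime] :=
  FractionRing (MvPolynomial (Fin (d - 1)) (GaloisField p n))

/-- The variable `y_m` (`1 ≤ m ≤ d-1`) viewed in `F_q(y_1,…,y_{d-1})`. -/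
noncomputable def yv (p n d : ℕ) [Fact p.Prime] (m : ℕ) : RatField p n d :=
  if h : 1 ≤ m ∧ m ≤ d - 1 then
    algebraMap (MvPolynomial (Fin (d - 1)) (GaloisField p n)) (RatField p n d)
      (X ⟨m - 1, by omega⟩)
  else 0

/-- The product `y_j ⋯ y_k`. -/
noncomputable def prodY (p n d : ℕ) [Fact p.Prime] (j k : ℕ) : RatField p n d :=
  ∏ t ∈ Finset.Icc j k, yv p n d t

/-- The recursively defined rational functions `a_{j,k}`:
`a_{j,1} = (1 − (y_j⋯y_{d-1})^{q-1})/(1 − y_{d-1}^{q-1})` and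
`a_{j,k} = (a_{j,k-1}^q − (y_j⋯y_{d-k})^{q^k−q^{k-1}} a_{j,k-1}) /
(a_{d-k,k-1}^q − y_{d-k}^{q^k−q^{k-1}} a_{d-k,k-1})`, with `q = p^n`. -/
noncomputable def aRec (p n d : ℕ) [Fact p.Prime] : ℕ → ℕ → RatField p n d
  | _, 0 => 0
  | j, 1 => (1 - (prodY p n d j (d - 1)) ^ (p ^ n - 1)) /
      (1 - (yv p n d (d - 1)) ^ (p ^ n - 1))
  | j, (k + 2) =>
      ((aRec p n d j (k + 1)) ^ (p ^ n) -
          (prodY p n d j (d - (k + 2))) ^ ((p ^ n) ^ (k + 2) - (p ^ n) ^ (k + 1)) *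
            aRec p n d j (k + 1)) /
      ((aRec p n d (d - (k + 2)) (k + 1)) ^ (p ^ n) -
          (yv p n d (d - (k + 2))) ^ ((p ^ n) ^ (k + 2) - (p ^ n) ^ (k + 1)) *
            aRec p n d (d - (k + 2)) (k + 1))


section general
variable {σ K : Type*} [Field K]
set_option linter.unusedSectionVars false

theorem myPrimeX (i : σ) : Prime (X i : MvPolynomial σ K) := by
  classical
  let e : MvPolynomial σ K ≃ₐ[K] Polynomial (MvPolynomial {b // b ≠ i} K) :=
    (renameEquiv K (Equiv.optionSubtypeNe i).symm).trans (optionEquivLeft K _)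
  rw [← MulEquiv.prime_iff e]
  show Prime (e (X i))
  have h1 : e (X i) = Polynomial.X := by
    simp only [e, AlgEquiv.trans_apply, renameEquiv_apply, rename_X,
      Equiv.optionSubtypeNe_symm_self, optionEquivLeft_X_none]
  rw [h1]
  exact Polynomial.prime_X

theorem myXdvd {i : σ} {f : MvPolynomial σ K} :
    X i ∣ f ↔ ∀ m : σ →₀ ℕ, m i = 0 → coeff m f = 0 := by
  rw [X_dvd_iff_modMonomial_eq_zero]
  constructor
  · intro h m hm
    have hle : ¬ (Finsupp.single i 1 ≤ m) := by
      simp [Finsupp.single_le_iff, hm]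
    rw [← coeff_modMonomial_of_not_le f hle, h, coeff_zero]
  · intro h
    ext m
    by_cases hle : Finsupp.single i 1 ≤ m
    · rw [coeff_modMonomial_of_le f hle, coeff_zero]
    · rw [coeff_modMonomial_of_not_le f hle, coeff_zero]
      apply h
      by_contra hne
      exact hle (by simpa [Finsupp.single_le_iff, Nat.one_le_iff_ne_zero] using hne)

theorem myNotDvdVars {i : σ} {f : MvPolynomial σ K} (h : i ∉ f.vars) (hf : f ≠ 0) :
    ¬ X i ∣ f := by
  intro hdvd
  apply hf
  rw [myXdvd] at hdvd
  ext m
  rw [coeff_zero]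
  by_contra hc
  have hmem : m ∈ f.support := by rwa [mem_support_iff]
  by_cases hmi : m i = 0
  · exact hc (hdvd m hmi)
  · exact h ((mem_vars i).mpr ⟨m, hmem, Finsupp.mem_support_iff.mpr hmi⟩)

theorem myNotDvdOneSub {π f : MvPolynomial σ K} (hπ : Prime π) (h : π ∣ f) :
    ¬ π ∣ (1 - f) := by
  intro h1
  have : π ∣ 1 := by simpa using dvd_add h1 h
  exact hπ.not_unit (isUnit_of_dvd_one this)

theorem myNotDvdSub {π f g : MvPolynomial σ K} (h : π ∣ g) (hf : ¬ π ∣ f) :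
    ¬ π ∣ (f - g) := fun h1 => hf (by simpa using dvd_add h1 h)

end general

section setup
variable (p n d : ℕ) [Fact p.Prime]

/-- The polynomial ring. -/
abbrev Rpoly := MvPolynomial (Fin (d - 1)) (GaloisField p n)

/-- The canonical map to the fraction field. -/
noncomputable abbrev phi : Rpoly p n d →+* RatField p n d :=
  algebraMap (Rpoly p n d) (RatField p n d)

/-- The variable `y_t` as a polynomial (or `1` if out of range). -/
noncomputable def gX (t : ℕ) : Rpoly p n d :=
  if h : 1 ≤ t ∧ t ≤ d - 1 then X ⟨t - 1, by omega⟩ else 1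

/-- The product `y_j ⋯ y_k` as a polynomial. -/
noncomputable def Pp (j k : ℕ) : Rpoly p n d :=
  ∏ t ∈ Finset.Icc j k, gX p n d t

variable {p n d}

theorem phi_injective : Function.Injective (phi p n d) :=
  IsFractionRing.injective _ _

theorem phi_ne_zero {f : Rpoly p n d} (hf : f ≠ 0) : phi p n d f ≠ 0 := by
  intro h
  exact hf (phi_injective (by simpa using h))

theorem gX_eq {t : ℕ} (h1 : 1 ≤ t) (h2 : t ≤ d - 1) :
    gX p n d t = X ⟨t - 1, by omega⟩ := by
  rw [gX, dif_pos ⟨h1, h2⟩]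

theorem prime_gX {t : ℕ} (h1 : 1 ≤ t) (h2 : t ≤ d - 1) : Prime (gX p n d t) := by
  rw [gX_eq h1 h2]; exact myPrimeX _

theorem yv_eq {m : ℕ} (h1 : 1 ≤ m) (h2 : m ≤ d - 1) :
    yv p n d m = phi p n d (gX p n d m) := by
  rw [yv, dif_pos ⟨h1, h2⟩, gX_eq h1 h2]

theorem prodY_eq {j k : ℕ} (h1 : 1 ≤ j) (h2 : k ≤ d - 1) :
    prodY p n d j k = phi p n d (Pp p n d j k) := by
  rw [prodY, Pp, map_prod]
  apply Finset.prod_congr rfl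
  intro t ht
  rw [Finset.mem_Icc] at ht
  exact yv_eq (le_trans h1 ht.1) (le_trans ht.2 h2)

theorem gX_dvd_Pp {t j k : ℕ} (h1 : 1 ≤ j) (hjt : j ≤ t) (htk : t ≤ k) (h2 : k ≤ d - 1) :
    gX p n d t ∣ Pp p n d j k :=
  Finset.dvd_prod_of_mem _ (Finset.mem_Icc.mpr ⟨hjt, htk⟩)

/-- All variables of `f` have (0-based) index `≥ m - 1`. -/
def VGe (m : ℕ) (f : Rpoly p n d) : Prop := ∀ w ∈ f.vars, m - 1 ≤ (w : ℕ)

theorem VGe_one {m : ℕ} : VGe m (1 : Rpoly p n d) := by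
  intro w hw; rw [vars_one] at hw; exact absurd hw (Finset.notMem_empty _)

theorem VGe_mono {m m' : ℕ} {f : Rpoly p n d} (h : VGe m' f) (hm : m ≤ m') : VGe m f :=
  fun w hw => le_trans (by omega) (h w hw)

theorem VGe_gX {m t : ℕ} (hmt : m ≤ t) (h2 : t ≤ d - 1) : VGe m (gX p n d t) := by
  by_cases h1 : 1 ≤ t
  · rw [gX_eq h1 h2]
    intro w hw
    rw [vars_X, Finset.mem_singleton] at hw
    subst hw; simp; omega
  · interval_cases t
    · rw [gX, dif_neg (by omega)]; exact VGe_one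

theorem VGe_mul {m : ℕ} {f g : Rpoly p n d} (hf : VGe m f) (hg : VGe m g) : VGe m (f * g) := by
  intro w hw
  rcases Finset.mem_union.mp (vars_mul f g hw) with h | h
  exacts [hf w h, hg w h]

theorem VGe_pow {m e : ℕ} {f : Rpoly p n d} (hf : VGe m f) : VGe m (f ^ e) :=
  fun w hw => hf w (vars_pow f e hw)

theorem VGe_sub {m : ℕ} {f g : Rpoly p n d} (hf : VGe m f) (hg : VGe m g) : VGe m (f - g) := by
  intro w hw
  rw [sub_eq_add_neg] at hw
  rcases Finset.mem_union.mp (vars_add_subset f (-g) hw) with h | h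
  · exact hf w h
  · exact hg w (by rwa [vars_neg] at h)

theorem VGe_Pp {m j k : ℕ} (hmj : m ≤ j) (h2 : k ≤ d - 1) : VGe m (Pp p n d j k) := by
  intro w hw
  have := vars_prod (s := Finset.Icc j k) (fun t => gX p n d t) hw
  rw [Finset.mem_biUnion] at this
  obtain ⟨t, ht, hw'⟩ := this
  rw [Finset.mem_Icc] at ht
  exact VGe_gX (le_trans hmj ht.1) (le_trans ht.2 h2) w hw'

/-- `¬ gX t ∣ f` follows from `VGe m f`, `f ≠ 0` for a lower index `t < m`. -/
theorem not_gX_dvd_of_VGe {m t : ℕ} {f : Rpoly p n d} (hV : VGe m f) (hf : f ≠ 0)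
    (h1 : 1 ≤ t) (h2 : t ≤ d - 1) (htm : t < m) : ¬ gX p n d t ∣ f := by
  rw [gX_eq h1 h2]
  apply myNotDvdVars _ hf
  intro hmem
  have := hV _ hmem
  simp at this
  omega

end setup

section preds
variable {p n d : ℕ} [Fact p.Prime]

/-- `r` has positive valuation at `X v`. -/
def PosP (v : Fin (d - 1)) (r : RatField p n d) : Prop :=
  ∃ A B : Rpoly p n d, X v ∣ A ∧ ¬ X v ∣ B ∧ r = phi p n d A / phi p n d B

/-- `r` has nonnegative valuation at `X v`. -/
def RegP (v : Fin (d - 1)) (r : RatField p n d) : Prop :=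
  ∃ A B : Rpoly p n d, ¬ X v ∣ B ∧ r = phi p n d A / phi p n d B

/-- `r` has zero valuation at `X v`. -/
def UnitP (v : Fin (d - 1)) (r : RatField p n d) : Prop :=
  ∃ A B : Rpoly p n d, ¬ X v ∣ A ∧ ¬ X v ∣ B ∧ r = phi p n d A / phi p n d B

theorem PosP.regP {v : Fin (d - 1)} {r : RatField p n d} (h : PosP v r) : RegP v r := by
  obtain ⟨A, B, _, hB, hr⟩ := h; exact ⟨A, B, hB, hr⟩

theorem UnitP.regP {v : Fin (d - 1)} {r : RatField p n d} (h : UnitP v r) : RegP v r := by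
  obtain ⟨A, B, _, hB, hr⟩ := h; exact ⟨A, B, hB, hr⟩

theorem ne_zero_of_not_dvd {v : Fin (d - 1)} {B : Rpoly p n d} (h : ¬ X v ∣ B) : B ≠ 0 :=
  fun h0 => h (h0 ▸ dvd_zero _)

theorem not_dvd_mul {v : Fin (d - 1)} {A B : Rpoly p n d} (hA : ¬ X v ∣ A) (hB : ¬ X v ∣ B) :
    ¬ X v ∣ A * B := fun h => by
  rcases (myPrimeX v).2.2 _ _ h with h | h
  exacts [hA h, hB h]

theorem not_dvd_pow {v : Fin (d - 1)} {A : Rpoly p n d} (hA : ¬ X v ∣ A) (e : ℕ) :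
    ¬ X v ∣ A ^ e := fun h => hA ((myPrimeX v).dvd_of_dvd_pow h)

theorem PosP.add {v : Fin (d - 1)} {r s : RatField p n d} (hr : PosP v r) (hs : PosP v s) :
    PosP v (r + s) := by
  obtain ⟨A, B, hA, hB, rfl⟩ := hr
  obtain ⟨C, E, hC, hE, rfl⟩ := hs
  refine ⟨A * E + C * B, B * E, ?_, not_dvd_mul hB hE, ?_⟩
  · exact dvd_add (Dvd.dvd.mul_right hA E) (Dvd.dvd.mul_right hC B)
  · rw [div_add_div _ _ (phi_ne_zero (ne_zero_of_not_dvd hB))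
      (phi_ne_zero (ne_zero_of_not_dvd hE))]
    simp only [map_add, map_mul]; ring_nf

theorem PosP.neg {v : Fin (d - 1)} {r : RatField p n d} (hr : PosP v r) : PosP v (-r) := by
  obtain ⟨A, B, hA, hB, rfl⟩ := hr
  exact ⟨-A, B, (dvd_neg).mpr hA, hB, by rw [map_neg, neg_div]⟩

theorem PosP.sub {v : Fin (d - 1)} {r s : RatField p n d} (hr : PosP v r) (hs : PosP v s) :
    PosP v (r - s) := by
  rw [sub_eq_add_neg]; exact hr.add hs.neg

theorem PosP.mul_regP {v : Fin (d - 1)} {r s : RatField p n d} (hr : PosP v r) (hs : RegP v s) :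
    PosP v (r * s) := by
  obtain ⟨A, B, hA, hB, rfl⟩ := hr
  obtain ⟨C, E, hE, rfl⟩ := hs
  exact ⟨A * C, B * E, Dvd.dvd.mul_right hA C, not_dvd_mul hB hE,
    by rw [map_mul, map_mul, div_mul_div_comm]⟩

theorem PosP.pow {v : Fin (d - 1)} {r : RatField p n d} (hr : PosP v r) {e : ℕ} (he : 1 ≤ e) :
    PosP v (r ^ e) := by
  obtain ⟨A, B, hA, hB, rfl⟩ := hr
  exact ⟨A ^ e, B ^ e, dvd_pow hA (by omega), not_dvd_pow hB e,
    by rw [map_pow, map_pow, div_pow]⟩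

theorem UnitP.inv {v : Fin (d - 1)} {r : RatField p n d} (hr : UnitP v r) : UnitP v r⁻¹ := by
  obtain ⟨A, B, hA, hB, rfl⟩ := hr
  exact ⟨B, A, hB, hA, by rw [inv_div]⟩

theorem PosP.div_unitP {v : Fin (d - 1)} {r s : RatField p n d} (hr : PosP v r) (hs : UnitP v s) :
    PosP v (r / s) := by
  rw [div_eq_mul_inv]; exact hr.mul_regP hs.inv.regP

theorem posP_phi {v : Fin (d - 1)} {A : Rpoly p n d} (hA : X v ∣ A) : PosP v (phi p n d A) :=
  ⟨A, 1, hA, fun h => (myPrimeX v).not_unit (isUnit_of_dvd_one h), by simp⟩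

end preds

section recursion
variable {p n d : ℕ} [Fact p.Prime]

theorem prime_not_dvd_mul {π A B : Rpoly p n d} (hπ : Prime π) (hA : ¬ π ∣ A) (hB : ¬ π ∣ B) :
    ¬ π ∣ A * B := fun h => by
  rcases hπ.2.2 _ _ h with h | h
  exacts [hA h, hB h]

theorem prime_not_dvd_pow {π A : Rpoly p n d} (hπ : Prime π) (hA : ¬ π ∣ A) (e : ℕ) :
    ¬ π ∣ A ^ e := fun h => hA (hπ.dvd_of_dvd_pow h)

theorem stepfrac {F : Type*} [Field F] (c e u : F) (he : e ≠ 0) {q : ℕ} (hq : 1 ≤ q) :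
    (c / e) ^ q - u * (c / e) = (c ^ q - u * c * e ^ (q - 1)) / e ^ q := by
  obtain ⟨q1, rfl⟩ : ∃ q1, q = q1 + 1 := ⟨q - 1, by omega⟩
  simp only [Nat.add_sub_cancel]
  rw [div_pow, pow_succ]
  field_simp
  ring

theorem aRec_one (j : ℕ) : aRec p n d j 1 =
    (1 - (prodY p n d j (d - 1)) ^ (p ^ n - 1)) /
      (1 - (yv p n d (d - 1)) ^ (p ^ n - 1)) := by
  rw [aRec]

theorem aRec_step (j k : ℕ) : aRec p n d j (k + 2) =
    ((aRec p n d j (k + 1)) ^ (p ^ n) -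
        (prodY p n d j (d - (k + 2))) ^ ((p ^ n) ^ (k + 2) - (p ^ n) ^ (k + 1)) *
          aRec p n d j (k + 1)) /
    ((aRec p n d (d - (k + 2)) (k + 1)) ^ (p ^ n) -
        (yv p n d (d - (k + 2))) ^ ((p ^ n) ^ (k + 2) - (p ^ n) ^ (k + 1)) *
          aRec p n d (d - (k + 2)) (k + 1)) := by
  rw [aRec]

theorem keyU (hq : 2 ≤ p ^ n) (hd : 2 ≤ d) :
    ∀ k, 1 ≤ k → k ≤ d - 1 → ∀ m, 1 ≤ m → m ≤ d - k →
    ∃ A B : Rpoly p n d,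
      aRec p n d m k = phi p n d A / phi p n d B ∧
      VGe m A ∧ VGe m B ∧
      ¬ gX p n d m ∣ A ∧
      (∀ t, 1 ≤ t → t ≤ d - k → ¬ gX p n d t ∣ B) := by
  intro k
  induction k using Nat.strong_induction_on with
  | _ k ih =>
  match k with
  | 0 => omega
  | 1 =>
    intro _ _ m h1m hm
    have hd1 : 1 ≤ d - 1 := by omega
    have hmd : m ≤ d - 1 := hm
    have hq1 : p ^ n - 1 ≠ 0 := by omega
    refine ⟨1 - (Pp p n d m (d - 1)) ^ (p ^ n - 1), 1 - (gX p n d (d - 1)) ^ (p ^ n - 1),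
      ?_, ?_, ?_, ?_, ?_⟩
    · rw [aRec_one, prodY_eq h1m le_rfl, yv_eq hd1 le_rfl]
      simp only [map_sub, map_one, map_pow]
    · exact VGe_sub VGe_one (VGe_pow (VGe_Pp le_rfl le_rfl))
    · exact VGe_sub VGe_one (VGe_pow (VGe_gX hmd le_rfl))
    · exact myNotDvdOneSub (prime_gX h1m hmd)
        (dvd_pow (gX_dvd_Pp h1m le_rfl hmd le_rfl) hq1)
    · have hBlast : ¬ gX p n d (d - 1) ∣ 1 - (gX p n d (d - 1)) ^ (p ^ n - 1) :=
        myNotDvdOneSub (prime_gX hd1 le_rfl) (dvd_pow dvd_rfl hq1)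
      have hBne : (1 : Rpoly p n d) - (gX p n d (d - 1)) ^ (p ^ n - 1) ≠ 0 :=
        fun h0 => hBlast (h0 ▸ dvd_zero _)
      intro t h1t htd
      rcases eq_or_lt_of_le (htd : t ≤ d - 1) with h | h
      · exact h ▸ hBlast
      · exact not_gX_dvd_of_VGe (VGe_sub VGe_one (VGe_pow (VGe_gX le_rfl le_rfl)))
          hBne h1t (by omega) h
  | (k' + 2) =>
    intro _ hkd m h1m hm
    -- abbreviations
    have hq2 : (1 : ℕ) ≤ p ^ n := by omega
    set q : ℕ := p ^ n with hqdef
    set QQ : ℕ := q ^ (k' + 2) - q ^ (k' + 1) with hQQdef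
    have hQQ1 : 1 ≤ QQ := by
      have : q ^ (k' + 1) < q ^ (k' + 2) :=
        Nat.pow_lt_pow_right (by omega) (by omega)
      omega
    set m' : ℕ := d - (k' + 2) with hm'def
    have h1m' : 1 ≤ m' := by omega
    have hm'd : m' ≤ d - 1 := by omega
    have hmm' : m ≤ m' := hm
    -- induction hypotheses
    obtain ⟨A, B, hab, hVA, hVB, hAnd, hBall⟩ :=
      ih (k' + 1) (by omega) (by omega) (by omega) m h1m (by omega)
    obtain ⟨C, E, hce, hVC, hVE, hCnd, hEall⟩ :=
      ih (k' + 1) (by omega) (by omega) (by omega) m' h1m' (by omega)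
    have hBnd : ¬ gX p n d m ∣ B := hBall m h1m (by omega)
    have hEnd : ¬ gX p n d m' ∣ E := hEall m' h1m' (by omega)
    have hBne : B ≠ 0 := fun h0 => hBnd (h0 ▸ dvd_zero _)
    have hEne : E ≠ 0 := fun h0 => hEnd (h0 ▸ dvd_zero _)
    have hphiB : phi p n d B ≠ 0 := phi_ne_zero hBne
    have hphiE : phi p n d E ≠ 0 := phi_ne_zero hEne
    -- the new numerator and denominator polynomials
    set N : Rpoly p n d := A ^ q - (Pp p n d m m') ^ QQ * A * B ^ (q - 1) with hNdef
    set D : Rpoly p n d := C ^ q - (gX p n d m') ^ QQ * C * E ^ (q - 1) with hDdef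
    have hVN : VGe m N :=
      VGe_sub (VGe_pow hVA)
        (VGe_mul (VGe_mul (VGe_pow (VGe_Pp le_rfl hm'd)) hVA) (VGe_pow hVB))
    have hVD : VGe m' D :=
      VGe_sub (VGe_pow hVC)
        (VGe_mul (VGe_mul (VGe_pow (VGe_gX le_rfl hm'd)) hVC) (VGe_pow hVE))
    have hDnd : ¬ gX p n d m' ∣ D :=
      myNotDvdSub
        (Dvd.dvd.mul_right (Dvd.dvd.mul_right (dvd_pow dvd_rfl (by omega)) C) _)
        (prime_not_dvd_pow (prime_gX h1m' hm'd) hCnd q)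
    have hDne : D ≠ 0 := fun h0 => hDnd (h0 ▸ dvd_zero _)
    have hDall : ∀ t, 1 ≤ t → t ≤ m' → ¬ gX p n d t ∣ D := by
      intro t h1t htm'
      rcases eq_or_lt_of_le htm' with h | h
      · exact h ▸ hDnd
      · exact not_gX_dvd_of_VGe hVD hDne h1t (by omega) h
    have hNnd : ¬ gX p n d m ∣ N :=
      myNotDvdSub
        (Dvd.dvd.mul_right
          (Dvd.dvd.mul_right
            (dvd_pow (gX_dvd_Pp h1m le_rfl hmm' hm'd) (by omega)) A) _)
        (prime_not_dvd_pow (prime_gX h1m (by omega)) hAnd q)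
    -- field identities
    have hnum : (aRec p n d m (k' + 1)) ^ q -
        (prodY p n d m m') ^ QQ * aRec p n d m (k' + 1) =
        phi p n d N / (phi p n d B) ^ q := by
      rw [hab, prodY_eq h1m hm'd, stepfrac _ _ _ hphiB hq2, hNdef]
      simp only [map_sub, map_mul, map_pow]
    have hden : (aRec p n d m' (k' + 1)) ^ q -
        (yv p n d m') ^ QQ * aRec p n d m' (k' + 1) =
        phi p n d D / (phi p n d E) ^ q := by
      rw [hce, yv_eq h1m' hm'd, stepfrac _ _ _ hphiE hq2, hDdef]
      simp only [map_sub, map_mul, map_pow]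
    have hphiD : phi p n d D ≠ 0 := phi_ne_zero hDne
    refine ⟨N * E ^ q, B ^ q * D, ?_, ?_, ?_, ?_, ?_⟩
    · rw [aRec_step, ← hm'def, ← hqdef, ← hQQdef, hnum, hden]
      simp only [map_mul, map_pow]
      have haux : ∀ x y z w : RatField p n d, y ≠ 0 → z ≠ 0 → w ≠ 0 →
          x / y / (z / w) = x * w / (y * z) := by
        intro x y z w hy hz hw
        field_simp
      exact haux _ _ _ _ (pow_ne_zero _ hphiB) hphiD (pow_ne_zero _ hphiE)
    · exact VGe_mul hVN (VGe_pow (VGe_mono hVE hmm'))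
    · exact VGe_mul (VGe_pow hVB) (VGe_mono hVD hmm')
    · exact prime_not_dvd_mul (prime_gX h1m (by omega)) hNnd
        (prime_not_dvd_pow (prime_gX h1m (by omega)) (hEall m h1m (by omega)) q)
    · intro t h1t htd
      exact prime_not_dvd_mul (prime_gX h1t (by omega))
        (prime_not_dvd_pow (prime_gX h1t (by omega)) (hBall t h1t (by omega)) q)
        (hDall t h1t (by omega))

end recursion

section congruence
variable {p n d : ℕ} [Fact p.Prime]

theorem charP_rat : CharP (RatField p n d) p :=
  charP_of_injective_algebraMap (phi_injective (p := p) (n := n) (d := d)) p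

theorem frobSub (x y : RatField p n d) : (x - y) ^ p ^ n = x ^ p ^ n - y ^ p ^ n := by
  haveI := charP_rat (p := p) (n := n) (d := d)
  haveI : ExpChar (RatField p n d) p := ExpChar.prime Fact.out
  exact sub_pow_expChar_pow x y n

theorem keyT (hq : 2 ≤ p ^ n) (hd : 2 ≤ d) {i j : ℕ} (hi : 1 ≤ i) (hid : i ≤ d - 1)
    (hj1 : 1 ≤ j) (hji : j ≤ i - 1) (hfin : i - 1 < d - 1) :
    ∀ r, 1 ≤ r → r ≤ d - i - 1 →
      PosP (⟨i - 1, hfin⟩ : Fin (d - 1)) (aRec p n d j r - aRec p n d i r) := by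
  have hi2 : 2 ≤ i := by omega
  intro r h1r
  induction r, h1r using Nat.le_induction with
  | base =>
    intro hrK
    have hiK : i ≤ d - 2 := by omega
    have hd1 : 1 ≤ d - 1 := by omega
    have hq1 : p ^ n - 1 ≠ 0 := by omega
    have hBlast : ¬ gX p n d (d - 1) ∣ 1 - (gX p n d (d - 1)) ^ (p ^ n - 1) :=
      myNotDvdOneSub (prime_gX hd1 le_rfl) (dvd_pow dvd_rfl hq1)
    have hBne : (1 : Rpoly p n d) - (gX p n d (d - 1)) ^ (p ^ n - 1) ≠ 0 :=
      fun h0 => hBlast (h0 ▸ dvd_zero _)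
    have hBnd : ¬ gX p n d i ∣ 1 - (gX p n d (d - 1)) ^ (p ^ n - 1) :=
      not_gX_dvd_of_VGe (VGe_sub VGe_one (VGe_pow (VGe_gX le_rfl le_rfl)))
        hBne hi hid (by omega)
    refine ⟨(Pp p n d i (d - 1)) ^ (p ^ n - 1) - (Pp p n d j (d - 1)) ^ (p ^ n - 1),
      1 - (gX p n d (d - 1)) ^ (p ^ n - 1), ?_, ?_, ?_⟩
    · rw [← gX_eq hi hid]
      exact dvd_sub (dvd_pow (gX_dvd_Pp hi le_rfl hid le_rfl) hq1)
        (dvd_pow (gX_dvd_Pp hj1 (by omega) hid le_rfl) hq1)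
    · rw [← gX_eq hi hid]
      exact hBnd
    · rw [aRec_one j, aRec_one i, prodY_eq hj1 le_rfl, prodY_eq hi le_rfl,
        yv_eq hd1 le_rfl, div_sub_div_same]
      simp only [map_sub, map_one, map_pow]
      congr 1
      ring
  | succ r h1r ihr =>
    intro hrK
    have hT : PosP (⟨i - 1, hfin⟩ : Fin (d - 1)) (aRec p n d j r - aRec p n d i r) :=
      ihr (by omega)
    obtain ⟨r', rfl⟩ : ∃ r', r = r' + 1 := ⟨r - 1, by omega⟩
    set v : Fin (d - 1) := ⟨i - 1, hfin⟩ with hv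
    set q : ℕ := p ^ n with hqdef
    set QQ : ℕ := q ^ (r' + 2) - q ^ (r' + 1) with hQQdef
    have hQQ1 : 1 ≤ QQ := by
      have : q ^ (r' + 1) < q ^ (r' + 2) := Nat.pow_lt_pow_right (by omega) (by omega)
      omega
    set m' : ℕ := d - (r' + 2) with hm'def
    have h1m' : 1 ≤ m' := by omega
    have hm'd : m' ≤ d - 1 := by omega
    have him' : i < m' := by omega
    -- representations from keyU
    obtain ⟨Aj, Bj, habj, _, _, _, hBjall⟩ :=
      keyU hq hd (r' + 1) (by omega) (by omega) j hj1 (by omega)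
    obtain ⟨Ai, Bi, habi, _, _, _, hBiall⟩ :=
      keyU hq hd (r' + 1) (by omega) (by omega) i hi (by omega)
    obtain ⟨C, E, hce, hVC, hVE, hCnd, hEall⟩ :=
      keyU hq hd (r' + 1) (by omega) (by omega) m' h1m' (by omega)
    have hEnd : ¬ gX p n d m' ∣ E := hEall m' h1m' (by omega)
    have hEne : E ≠ 0 := fun h0 => hEnd (h0 ▸ dvd_zero _)
    have hphiE : phi p n d E ≠ 0 := phi_ne_zero hEne
    set D : Rpoly p n d := C ^ q - (gX p n d m') ^ QQ * C * E ^ (q - 1) with hDdef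
    have hVD : VGe m' D :=
      VGe_sub (VGe_pow hVC)
        (VGe_mul (VGe_mul (VGe_pow (VGe_gX le_rfl hm'd)) hVC) (VGe_pow hVE))
    have hDnd : ¬ gX p n d m' ∣ D :=
      myNotDvdSub
        (Dvd.dvd.mul_right (Dvd.dvd.mul_right (dvd_pow dvd_rfl (by omega)) C) _)
        (prime_not_dvd_pow (prime_gX h1m' hm'd) hCnd q)
    have hDne : D ≠ 0 := fun h0 => hDnd (h0 ▸ dvd_zero _)
    have hDndi : ¬ gX p n d i ∣ D :=
      not_gX_dvd_of_VGe hVD hDne hi hid him'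
    have hden : (aRec p n d m' (r' + 1)) ^ q -
        (yv p n d m') ^ QQ * aRec p n d m' (r' + 1) =
        phi p n d D / (phi p n d E) ^ q := by
      rw [hce, yv_eq h1m' hm'd, stepfrac _ _ _ hphiE (by omega), hDdef]
      simp only [map_sub, map_mul, map_pow]
    have hUdeno : UnitP v ((aRec p n d m' (r' + 1)) ^ q -
        (yv p n d m') ^ QQ * aRec p n d m' (r' + 1)) := by
      refine ⟨D, E ^ q, ?_, ?_, by rw [hden, map_pow]⟩
      · rw [← gX_eq hi hid]; exact hDndi
      · rw [← gX_eq hi hid]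
        exact prime_not_dvd_pow (prime_gX hi hid) (hEall i hi (by omega)) q
    -- the two numerators
    have hregj : RegP v (aRec p n d j (r' + 1)) :=
      ⟨Aj, Bj, by rw [← gX_eq hi hid]; exact hBjall i hi (by omega), habj⟩
    have hregi : RegP v (aRec p n d i (r' + 1)) :=
      ⟨Ai, Bi, by rw [← gX_eq hi hid]; exact hBiall i hi (by omega), habi⟩
    have hposPj : PosP v ((prodY p n d j m') ^ QQ) := by
      rw [prodY_eq hj1 hm'd, ← map_pow]
      exact posP_phi (by
        rw [← gX_eq hi hid]
        exact dvd_pow (gX_dvd_Pp hj1 (by omega) (by omega) hm'd) (by omega))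
    have hposPi : PosP v ((prodY p n d i m') ^ QQ) := by
      rw [prodY_eq hi hm'd, ← map_pow]
      exact posP_phi (by
        rw [← gX_eq hi hid]
        exact dvd_pow (gX_dvd_Pp hi le_rfl (by omega) hm'd) (by omega))
    have hnumdiff : PosP v
        (((aRec p n d j (r' + 1)) ^ q - (prodY p n d j m') ^ QQ * aRec p n d j (r' + 1)) -
         ((aRec p n d i (r' + 1)) ^ q - (prodY p n d i m') ^ QQ * aRec p n d i (r' + 1))) := by
      have hfr : ((aRec p n d j (r' + 1)) ^ q -
          (prodY p n d j m') ^ QQ * aRec p n d j (r' + 1)) -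
          ((aRec p n d i (r' + 1)) ^ q - (prodY p n d i m') ^ QQ * aRec p n d i (r' + 1)) =
          (aRec p n d j (r' + 1) - aRec p n d i (r' + 1)) ^ q -
          (prodY p n d j m') ^ QQ * aRec p n d j (r' + 1) +
          (prodY p n d i m') ^ QQ * aRec p n d i (r' + 1) := by
        rw [hqdef, frobSub]
        ring
      rw [hfr]
      exact ((hT.pow (by omega)).sub (hposPj.mul_regP hregj)).add (hposPi.mul_regP hregi)
    -- put it together
    rw [aRec_step, aRec_step, ← hm'def, ← hqdef, ← hQQdef, div_sub_div_same]
    exact hnumdiff.div_unitP hUdeno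

end congruence

/-- **Congruence `a_{j,d-i} ≡ 1 (mod y_i)`.**  For `1 ≤ j ≤ i-1`, the rational function
`a_{j,d-i} − 1` has positive `y_i`-adic valuation: it can be written `A/B` with `A`
divisible by `y_i` and `B` not divisible by `y_i`. -/
theorem aRec_congruent_one_mod_yi
    (p n d i : ℕ) [Fact p.Prime] (hn : 0 < n) (hd : 2 ≤ d)
    (hi : 1 ≤ i) (hid : i ≤ d - 1) :
    ∀ j : ℕ, 1 ≤ j → j ≤ i - 1 →
      ∃ A B : MvPolynomial (Fin (d - 1)) (GaloisField p n),
        (X ⟨i - 1, by omega⟩ ∣ A) ∧ ¬ (X ⟨i - 1, by omega⟩ ∣ B) ∧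
        aRec p n d j (d - i) - 1 =
          algebraMap (MvPolynomial (Fin (d - 1)) (GaloisField p n)) (RatField p n d) A /
            algebraMap (MvPolynomial (Fin (d - 1)) (GaloisField p n)) (RatField p n d) B := by
  intro j hj1 hji
  have hp2 : 2 ≤ p := (Fact.out : p.Prime).two_le
  have hq : 2 ≤ p ^ n := by
    calc 2 = 2 ^ 1 := by norm_num
    _ ≤ 2 ^ n := Nat.pow_le_pow_right (by omega) (by omega)
    _ ≤ p ^ n := Nat.pow_le_pow_left hp2 n
  have hi2 : 2 ≤ i := by omega
  have hfin : i - 1 < d - 1 := by omega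
  have hd1 : 1 ≤ d - 1 := by omega
  have hq1 : p ^ n - 1 ≠ 0 := by omega
  set q : ℕ := p ^ n with hqdef
  rcases eq_or_lt_of_le (show 1 ≤ d - i by omega) with hK | hK2
  · -- case d - i = 1, i.e. i = d - 1
    have hidd : i = d - 1 := by omega
    have hBlast : ¬ gX p n d (d - 1) ∣ 1 - (gX p n d (d - 1)) ^ (q - 1) :=
      myNotDvdOneSub (prime_gX hd1 le_rfl) (dvd_pow dvd_rfl hq1)
    have hBne : (1 : Rpoly p n d) - (gX p n d (d - 1)) ^ (q - 1) ≠ 0 :=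
      fun h0 => hBlast (h0 ▸ dvd_zero _)
    have hgi : gX p n d (d - 1) = X (⟨i - 1, by omega⟩ : Fin (d - 1)) := by
      rw [gX_eq hd1 le_rfl]
      exact congrArg X (by simp only [Fin.mk.injEq]; omega)
    refine ⟨(gX p n d (d - 1)) ^ (q - 1) - (Pp p n d j (d - 1)) ^ (q - 1),
      1 - (gX p n d (d - 1)) ^ (q - 1), ?_, ?_, ?_⟩
    · rw [← hgi]
      exact dvd_sub (dvd_pow dvd_rfl hq1)
        (dvd_pow (gX_dvd_Pp hj1 (by omega) le_rfl le_rfl) hq1)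
    · rw [← hgi]
      exact hBlast
    · rw [← hK, aRec_one j, prodY_eq hj1 le_rfl, yv_eq hd1 le_rfl, ← hqdef]
      rw [div_sub_one (by
        simpa only [map_sub, map_one, map_pow] using phi_ne_zero hBne)]
      simp only [map_sub, map_one, map_pow]
      congr 1
      ring
  · -- case d - i ≥ 2
    obtain ⟨k', hk'⟩ : ∃ k', d - i = k' + 2 := ⟨d - i - 2, by omega⟩
    have hm'i : d - (k' + 2) = i := by omega
    set v : Fin (d - 1) := ⟨i - 1, hfin⟩ with hv
    set QQ : ℕ := q ^ (k' + 2) - q ^ (k' + 1) with hQQdef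
    have hQQ1 : 1 ≤ QQ := by
      have : q ^ (k' + 1) < q ^ (k' + 2) := Nat.pow_lt_pow_right (by omega) (by omega)
      omega
    -- congruence of level k'+1
    have hT : PosP v (aRec p n d j (k' + 1) - aRec p n d i (k' + 1)) :=
      keyT hq hd hi (by omega) hj1 hji hfin (k' + 1) (by omega) (by omega)
    -- representations
    obtain ⟨Aj, Bj, habj, _, _, _, hBjall⟩ :=
      keyU hq hd (k' + 1) (by omega) (by omega) j hj1 (by omega)
    obtain ⟨C, E, hce, hVC, hVE, hCnd, hEall⟩ :=
      keyU hq hd (k' + 1) (by omega) (by omega) i hi (by omega)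
    have hEnd : ¬ gX p n d i ∣ E := hEall i hi (by omega)
    have hEne : E ≠ 0 := fun h0 => hEnd (h0 ▸ dvd_zero _)
    have hphiE : phi p n d E ≠ 0 := phi_ne_zero hEne
    set D : Rpoly p n d := C ^ q - (gX p n d i) ^ QQ * C * E ^ (q - 1) with hDdef
    have hDnd : ¬ gX p n d i ∣ D :=
      myNotDvdSub
        (Dvd.dvd.mul_right (Dvd.dvd.mul_right (dvd_pow dvd_rfl (by omega)) C) _)
        (prime_not_dvd_pow (prime_gX hi hid) hCnd q)
    have hDne : D ≠ 0 := fun h0 => hDnd (h0 ▸ dvd_zero _)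
    have hphiD : phi p n d D ≠ 0 := phi_ne_zero hDne
    have hden : (aRec p n d i (k' + 1)) ^ q -
        (yv p n d i) ^ QQ * aRec p n d i (k' + 1) =
        phi p n d D / (phi p n d E) ^ q := by
      rw [hce, yv_eq hi hid, stepfrac _ _ _ hphiE (by omega), hDdef]
      simp only [map_sub, map_mul, map_pow]
    have hdeno_ne : (aRec p n d i (k' + 1)) ^ q -
        (yv p n d i) ^ QQ * aRec p n d i (k' + 1) ≠ 0 := by
      rw [hden]
      exact div_ne_zero hphiD (pow_ne_zero _ hphiE)
    have hUdeno : UnitP v ((aRec p n d i (k' + 1)) ^ q -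
        (yv p n d i) ^ QQ * aRec p n d i (k' + 1)) := by
      refine ⟨D, E ^ q, ?_, ?_, by rw [hden, map_pow]⟩
      · rw [← gX_eq hi hid]; exact hDnd
      · rw [← gX_eq hi hid]; exact prime_not_dvd_pow (prime_gX hi hid) hEnd q
    have hregj : RegP v (aRec p n d j (k' + 1)) :=
      ⟨Aj, Bj, by rw [← gX_eq hi hid]; exact hBjall i hi (by omega), habj⟩
    have hregi : RegP v (aRec p n d i (k' + 1)) :=
      (UnitP.regP ⟨C, E, by rw [← gX_eq hi hid]; exact hCnd,
        by rw [← gX_eq hi hid]; exact hEnd, hce⟩)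
    have hposPj : PosP v ((prodY p n d j i) ^ QQ) := by
      rw [prodY_eq hj1 hid, ← map_pow]
      exact posP_phi (by
        rw [← gX_eq hi hid]
        exact dvd_pow (gX_dvd_Pp hj1 (by omega) le_rfl hid) (by omega))
    have hposYi : PosP v ((yv p n d i) ^ QQ) := by
      rw [yv_eq hi hid, ← map_pow]
      exact posP_phi (by
        rw [← gX_eq hi hid]
        exact dvd_pow dvd_rfl (by omega))
    have hnumdiff : PosP v
        (((aRec p n d j (k' + 1)) ^ q - (prodY p n d j i) ^ QQ * aRec p n d j (k' + 1)) -
         ((aRec p n d i (k' + 1)) ^ q - (yv p n d i) ^ QQ * aRec p n d i (k' + 1))) := by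
      have hfr : ((aRec p n d j (k' + 1)) ^ q -
          (prodY p n d j i) ^ QQ * aRec p n d j (k' + 1)) -
          ((aRec p n d i (k' + 1)) ^ q - (yv p n d i) ^ QQ * aRec p n d i (k' + 1)) =
          (aRec p n d j (k' + 1) - aRec p n d i (k' + 1)) ^ q -
          (prodY p n d j i) ^ QQ * aRec p n d j (k' + 1) +
          (yv p n d i) ^ QQ * aRec p n d i (k' + 1) := by
        rw [hqdef, frobSub]
        ring
      rw [hfr]
      exact ((hT.pow (by omega)).sub (hposPj.mul_regP hregj)).add
        (hposYi.mul_regP hregi)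
    have hfinal : PosP v (aRec p n d j (d - i) - 1) := by
      rw [hk', aRec_step, hm'i, ← hqdef, ← hQQdef]
      rw [div_sub_one hdeno_ne]
      exact hnumdiff.div_unitP hUdeno
    obtain ⟨A, B, h1, h2, h3⟩ := hfinal
    exact ⟨A, B, h1, h2, h3⟩
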